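/- Let σ be a permutation of {1,…,n} and let X be the permutation matrix with entries x_{ij} = δ_{σ(i),j}. Then for subsets A, B ⊆ {1,…,n}, the Laplace product satisfies X{A|B} = sgn(σ) if σ(A) = B, and X{A|B} = 0 otherwise. -/

import Mathlib

open Finset

/-- The minor `X(A|B)`: the determinant of the submatrix of `X` with row indices in `A` and
column indices in `B`, taken in increasing order; `0` if `|A| ≠ |B|`. -/
def minorM {m n : ℕ} {R : Type*} [CommRing R]
    (X : Matrix (Fin m) (Fin n) R) (A : Finset (Fin m)) (B : Finset (Fin n)) : R :=
  if h : A.card = B.card then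
    (Matrix.of fun i j : Fin A.card =>
      X (A.orderEmbOfFin rfl i) (B.orderEmbOfFin h.symm j)).det
  else 0

/-- The Laplace product `X{A|B} = (-1)^(ΣA+ΣB) X(A|B) X(Ã|B̃)`, where elements of
`Fin n` are counted as the numbers `1,…,n` (so `i : Fin n` counts as `i+1`). -/
def lap {n : ℕ} {R : Type*} [CommRing R]
    (X : Matrix (Fin n) (Fin n) R) (A B : Finset (Fin n)) : R :=
  (-1 : R) ^ (∑ i ∈ A, ((i : ℕ) + 1) + ∑ j ∈ B, ((j : ℕ) + 1)) *
    (minorM X A B * minorM X Aᶜ Bᶜ)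

/-- The partial order `S ≤ T` on finite subsets of a linearly ordered set:
writing `S = {s₁<⋯<s_p}` and `T = {t₁<⋯<t_q}`, it means `p ≥ q` and `s_ν ≤ t_ν` for `ν ≤ q`. -/
def domLE {α : Type*} [LinearOrder α] (S T : Finset α) : Prop :=
  T.card ≤ S.card ∧ ∀ (ν : ℕ) (hT : ν < (T.sort (· ≤ ·)).length)
    (hS : ν < (S.sort (· ≤ ·)).length),
    (S.sort (· ≤ ·))[ν] ≤ (T.sort (· ≤ ·))[ν]

/-- A subset `S ⊆ {1,…,n}` is good if `S ≤ S̃` where `S̃` is the complement of `S`. -/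
def goodSet {n : ℕ} (S : Finset (Fin n)) : Prop := domLE S Sᶜ

/-- The generic `m×n` matrix, whose entries are the indeterminates `x_{ij}`. -/
noncomputable def genX (m n : ℕ) (R : Type*) [CommRing R] :
    Matrix (Fin m) (Fin n) (MvPolynomial (Fin m × Fin n) R) :=
  Matrix.of fun i j => MvPolynomial.X (i, j)
/-- For the permutation matrix `X = (δ_{σ(i),j})`, the Laplace product is
`X{A|B} = sgn σ` if `σ(A) = B` and `0` otherwise. -/
def sumEquiv (n k : ℕ) (hk : k ≤ n) : Fin n ≃ (Fin k ⊕ Fin (n - k)) where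
  toFun i := if h : (i : ℕ) < k then .inl ⟨i, h⟩ else .inr ⟨(i : ℕ) - k, by omega⟩
  invFun := Sum.elim (fun j => ⟨j, by omega⟩) (fun j => ⟨k + j, by omega⟩)
  left_inv i := by
    by_cases h : (i : ℕ) < k
    · simp [h]
    · simp only [h, dif_neg, Sum.elim_inr]
      exact Fin.ext (by simp; omega)
  right_inv j := by
    rcases j with j | j
    · simp [j.is_lt]
    · have h : ¬ ((k + (j : ℕ)) < k) := by omega
      simp only [Sum.elim_inr, h, dif_neg]
      exact (dif_neg h).trans (congrArg Sum.inr (Fin.ext (by simp)))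

theorem card_le_of_fin {n : ℕ} (A : Finset (Fin n)) : A.card ≤ n := by
  simpa using A.card_le_univ

theorem card_compl_fin {n : ℕ} (A : Finset (Fin n)) : Aᶜ.card = n - A.card := by
  simp [Finset.card_compl]

noncomputable def blockPerm {n : ℕ} (A : Finset (Fin n)) : Equiv.Perm (Fin n) :=
  Equiv.ofBijective
    (fun i => Sum.elim (A.orderEmbOfFin rfl) (Aᶜ.orderEmbOfFin (card_compl_fin A))
      (sumEquiv n A.card (card_le_of_fin A) i))
    (by
      refine (Finite.injective_iff_bijective).1 ?_
      intro i j hij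
      dsimp only at hij
      rcases h1 : sumEquiv n A.card (card_le_of_fin A) i with a | a <;>
        rcases h2 : sumEquiv n A.card (card_le_of_fin A) j with b | b <;>
          rw [h1, h2] at hij <;> simp only [Sum.elim_inl, Sum.elim_inr] at hij
      · have := (A.orderEmbOfFin rfl).injective hij
        subst this
        exact (sumEquiv n A.card (card_le_of_fin A)).injective (h1.trans h2.symm)
      · have h3 := A.orderEmbOfFin_mem rfl a
        have h4 := Aᶜ.orderEmbOfFin_mem (card_compl_fin A) b
        rw [hij] at h3; simp only [Finset.mem_compl] at h4; exact absurd h3 h4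
      · have h3 := A.orderEmbOfFin_mem rfl b
        have h4 := Aᶜ.orderEmbOfFin_mem (card_compl_fin A) a
        rw [← hij] at h3; simp only [Finset.mem_compl] at h4; exact absurd h3 h4
      · have := (Aᶜ.orderEmbOfFin (card_compl_fin A)).injective hij
        subst this
        exact (sumEquiv n A.card (card_le_of_fin A)).injective (h1.trans h2.symm))

theorem blockPerm_apply_lt {n : ℕ} (A : Finset (Fin n)) (i : Fin n) (h : (i : ℕ) < A.card) :
    blockPerm A i = A.orderEmbOfFin rfl ⟨i, h⟩ := by
  simp [blockPerm, Equiv.ofBijective, _root_.sumEquiv, h]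

theorem blockPerm_apply_ge {n : ℕ} (A : Finset (Fin n)) (i : Fin n) (h : ¬ (i : ℕ) < A.card) :
    blockPerm A i = Aᶜ.orderEmbOfFin (card_compl_fin A) ⟨(i : ℕ) - A.card, by omega⟩ := by
  simp [blockPerm, Equiv.ofBijective, _root_.sumEquiv, h]

section Swap
variable {n : ℕ} (A : Finset (Fin n)) (a b : Fin n)

theorem compl_insert_erase (hab : (a : ℕ) + 1 = b) (ha : a ∉ A) (hb : b ∈ A) :
    (insert a (A.erase b))ᶜ = insert b (Aᶜ.erase a) := by
  have hne : a ≠ b := fun h => by omega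
  ext x
  simp only [Finset.mem_compl, Finset.mem_insert, Finset.mem_erase]
  by_cases hxa : x = a
  · subst hxa; simp [ha, hne]
  · by_cases hxb : x = b
    · subst hxb; simp [hb, hxa]
    · simp [hxa, hxb]

theorem card_insert_erase (hab : (a : ℕ) + 1 = b) (ha : a ∉ A) (hb : b ∈ A) :
    (insert a (A.erase b)).card = A.card := by
  have hne : a ≠ b := fun h => by omega
  rw [Finset.card_insert_of_notMem (by simp [ha]), Finset.card_erase_of_mem hb]
  have := Finset.card_pos.2 ⟨b, hb⟩
  omega

theorem blockPerm_insert_erase (hab : (a : ℕ) + 1 = b) (ha : a ∉ A) (hb : b ∈ A) :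
    blockPerm (insert a (A.erase b)) = Equiv.swap a b * blockPerm A := by
  set A' := insert a (A.erase b) with hA'
  have hne : a ≠ b := fun h => by omega
  have hcard : A'.card = A.card := card_insert_erase A a b hab ha hb
  have hcompl : A'ᶜ = insert b (Aᶜ.erase a) := compl_insert_erase A a b hab ha hb
  -- first block
  have h1 : (fun ν : Fin A.card => Equiv.swap a b (A.orderEmbOfFin rfl ν))
      = A'.orderEmbOfFin hcard := by
    refine Finset.orderEmbOfFin_unique hcard ?_ ?_
    · intro ν
      have hmem := A.orderEmbOfFin_mem rfl ν
      by_cases h : A.orderEmbOfFin rfl ν = b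
      · rw [h, Equiv.swap_apply_right]; exact Finset.mem_insert_self _ _
      · rw [Equiv.swap_apply_of_ne_of_ne (fun h' => ha (by rw [← h']; exact hmem)) h]
        exact Finset.mem_insert_of_mem (Finset.mem_erase.2 ⟨h, hmem⟩)
    · intro ν μ hνμ
      show Equiv.swap a b (A.orderEmbOfFin rfl ν) < Equiv.swap a b (A.orderEmbOfFin rfl μ)
      have hx := A.orderEmbOfFin_mem rfl ν
      have hy := A.orderEmbOfFin_mem rfl μ
      have hxy : A.orderEmbOfFin rfl ν < A.orderEmbOfFin rfl μ :=
        (A.orderEmbOfFin rfl).strictMono hνμ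
      have hxa : A.orderEmbOfFin rfl ν ≠ a := fun h' => ha (h' ▸ hx)
      have hya : A.orderEmbOfFin rfl μ ≠ a := fun h' => ha (h' ▸ hy)
      by_cases hxb : A.orderEmbOfFin rfl ν = b
      · have hyb : A.orderEmbOfFin rfl μ ≠ b := fun h' => (ne_of_lt hxy) (hxb.trans h'.symm)
        rw [hxb, Equiv.swap_apply_right, Equiv.swap_apply_of_ne_of_ne hya hyb]
        have h3 : (b : ℕ) < (A.orderEmbOfFin rfl μ : ℕ) := by rw [← hxb]; exact hxy
        exact Fin.lt_def.2 (by omega)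
      · by_cases hyb : A.orderEmbOfFin rfl μ = b
        · rw [hyb, Equiv.swap_apply_right, Equiv.swap_apply_of_ne_of_ne hxa hxb]
          have h3 : ((A.orderEmbOfFin rfl ν : Fin n) : ℕ) < (b : ℕ) := by rw [← hyb]; exact hxy
          have h4 : ((A.orderEmbOfFin rfl ν : Fin n) : ℕ) ≠ (a : ℕ) :=
            fun h' => hxa (Fin.ext h')
          exact Fin.lt_def.2 (by omega)
        · rw [Equiv.swap_apply_of_ne_of_ne hxa hxb, Equiv.swap_apply_of_ne_of_ne hya hyb]
          exact hxy
  -- second block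
  have hcard2 : A'ᶜ.card = n - A.card := by rw [card_compl_fin, hcard]
  have h2 : (fun ν : Fin (n - A.card) =>
      Equiv.swap a b (Aᶜ.orderEmbOfFin (card_compl_fin A) ν)) = A'ᶜ.orderEmbOfFin hcard2 := by
    refine Finset.orderEmbOfFin_unique hcard2 ?_ ?_
    · intro ν
      have hmem := Aᶜ.orderEmbOfFin_mem (card_compl_fin A) ν
      rw [hcompl]
      by_cases h : Aᶜ.orderEmbOfFin (card_compl_fin A) ν = a
      · rw [h, Equiv.swap_apply_left]; exact Finset.mem_insert_self _ _
      · rw [Equiv.swap_apply_of_ne_of_ne h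
          (fun h' => (Finset.mem_compl.1 (by rw [← h']; exact hmem : b ∈ Aᶜ)) hb)]
        exact Finset.mem_insert_of_mem (Finset.mem_erase.2 ⟨h, hmem⟩)
    · intro ν μ hνμ
      show Equiv.swap a b (Aᶜ.orderEmbOfFin (card_compl_fin A) ν)
        < Equiv.swap a b (Aᶜ.orderEmbOfFin (card_compl_fin A) μ)
      have hx := Aᶜ.orderEmbOfFin_mem (card_compl_fin A) ν
      have hy := Aᶜ.orderEmbOfFin_mem (card_compl_fin A) μ
      have hxy : Aᶜ.orderEmbOfFin (card_compl_fin A) ν < Aᶜ.orderEmbOfFin (card_compl_fin A) μ :=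
        (Aᶜ.orderEmbOfFin (card_compl_fin A)).strictMono hνμ
      have hxb : Aᶜ.orderEmbOfFin (card_compl_fin A) ν ≠ b :=
        fun h' => (Finset.mem_compl.1 (h' ▸ hx)) hb
      have hyb : Aᶜ.orderEmbOfFin (card_compl_fin A) μ ≠ b :=
        fun h' => (Finset.mem_compl.1 (h' ▸ hy)) hb
      by_cases hxa : Aᶜ.orderEmbOfFin (card_compl_fin A) ν = a
      · have hya : Aᶜ.orderEmbOfFin (card_compl_fin A) μ ≠ a :=
          fun h' => (ne_of_lt hxy) (hxa.trans h'.symm)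
        rw [hxa, Equiv.swap_apply_left, Equiv.swap_apply_of_ne_of_ne hya hyb]
        have h3 : (a : ℕ) < (Aᶜ.orderEmbOfFin (card_compl_fin A) μ : ℕ) := by
          rw [← hxa]; exact hxy
        have h4 : ((Aᶜ.orderEmbOfFin (card_compl_fin A) μ : Fin n) : ℕ) ≠ (b : ℕ) :=
          fun h' => hyb (Fin.ext h')
        exact Fin.lt_def.2 (by omega)
      · by_cases hya : Aᶜ.orderEmbOfFin (card_compl_fin A) μ = a
        · rw [hya, Equiv.swap_apply_left, Equiv.swap_apply_of_ne_of_ne hxa hxb]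
          have h3 : ((Aᶜ.orderEmbOfFin (card_compl_fin A) ν : Fin n) : ℕ) < (a : ℕ) := by
            rw [← hya]; exact hxy
          exact Fin.lt_def.2 (by omega)
        · rw [Equiv.swap_apply_of_ne_of_ne hxa hxb, Equiv.swap_apply_of_ne_of_ne hya hyb]
          exact hxy
  -- combine
  ext i
  simp only [Equiv.Perm.mul_apply]
  by_cases h : (i : ℕ) < A.card
  · have h' : (i : ℕ) < A'.card := by rw [hcard]; exact h
    rw [blockPerm_apply_lt A i h, blockPerm_apply_lt A' i h']
    have h5 : Equiv.swap a b (A.orderEmbOfFin rfl ⟨(i : ℕ), h⟩)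
        = A'.orderEmbOfFin hcard ⟨(i : ℕ), h⟩ := congrFun h1 ⟨(i : ℕ), h⟩
    rw [h5]
    exact congrArg Fin.val (Finset.orderEmbOfFin_eq_orderEmbOfFin_iff.2 rfl)
  · have h' : ¬ (i : ℕ) < A'.card := by rw [hcard]; exact h
    rw [blockPerm_apply_ge A i h, blockPerm_apply_ge A' i h']
    have h5 : Equiv.swap a b (Aᶜ.orderEmbOfFin (card_compl_fin A) ⟨(i : ℕ) - A.card, by omega⟩)
        = A'ᶜ.orderEmbOfFin hcard2 ⟨(i : ℕ) - A.card, by omega⟩ :=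
      congrFun h2 ⟨(i : ℕ) - A.card, by omega⟩
    rw [h5]
    exact congrArg Fin.val (Finset.orderEmbOfFin_eq_orderEmbOfFin_iff.2 (by simp only [Fin.val_mk]; omega))

end Swap

section Initial
variable {n : ℕ} {A : Finset (Fin n)}

theorem mem_iff_lt_card_of_initial
    (hP : ∀ b ∈ A, ∀ a : Fin n, (a : ℕ) + 1 = (b : ℕ) → a ∈ A) :
    ∀ i : Fin n, i ∈ A ↔ (i : ℕ) < A.card := by
  have hdc : ∀ b ∈ A, ∀ a : Fin n, a ≤ b → a ∈ A := by
    intro b hb a hab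
    obtain ⟨d, hd⟩ : ∃ d, (a : ℕ) + d = (b : ℕ) := ⟨b - a, by omega⟩
    induction d generalizing a with
    | zero => have : a = b := Fin.ext (by omega); exact this ▸ hb
    | succ d ih =>
      have hd' : (⟨(a : ℕ) + 1, by omega⟩ : Fin n) ∈ A := by
        apply ih ⟨(a : ℕ) + 1, by omega⟩ (Fin.le_def.2 (by simp; omega)) (by simp; omega)
      exact hP _ hd' a (by simp)
  intro i
  constructor
  · intro hi
    have hsub : Finset.Iic i ⊆ A := fun x hx => hdc i hi x (Finset.mem_Iic.1 hx)
    have := Finset.card_le_card hsub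
    rw [Fin.card_Iic] at this
    omega
  · intro hi
    by_contra hiA
    have hsub : A ⊆ Finset.Iio i := by
      intro x hx
      rw [Finset.mem_Iio]
      by_contra hxi
      exact hiA (hdc x hx i (le_of_not_gt hxi))
    have := Finset.card_le_card hsub
    rw [Fin.card_Iio] at this
    omega

theorem blockPerm_initial
    (hP : ∀ b ∈ A, ∀ a : Fin n, (a : ℕ) + 1 = (b : ℕ) → a ∈ A) :
    blockPerm A = 1 := by
  have hm := mem_iff_lt_card_of_initial hP
  have hle := card_le_of_fin A
  have h1 : (fun ν : Fin A.card => (⟨(ν : ℕ), by omega⟩ : Fin n)) = A.orderEmbOfFin rfl := by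
    refine Finset.orderEmbOfFin_unique rfl ?_ ?_
    · intro ν; exact (hm _).2 (by simp)
    · intro ν μ h; exact Fin.lt_def.2 (by simpa using h)
  have h2 : (fun ν : Fin (n - A.card) => (⟨A.card + (ν : ℕ), by omega⟩ : Fin n))
      = Aᶜ.orderEmbOfFin (card_compl_fin A) := by
    refine Finset.orderEmbOfFin_unique (card_compl_fin A) ?_ ?_
    · intro ν
      rw [Finset.mem_compl]
      intro hmem
      have := (hm _).1 hmem
      simp only [Fin.val_mk] at this
      omega
    · intro ν μ h; exact Fin.lt_def.2 (by simpa using h)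
  refine Equiv.ext fun i => ?_
  show blockPerm A i = i
  by_cases h : (i : ℕ) < A.card
  · rw [blockPerm_apply_lt A i h, ← congrFun h1 ⟨(i : ℕ), h⟩]
  · rw [blockPerm_apply_ge A i h, ← congrFun h2 ⟨(i : ℕ) - A.card, by omega⟩]
    exact Fin.ext (by simp only [Fin.val_mk]; omega)

theorem sum_initial
    (hP : ∀ b ∈ A, ∀ a : Fin n, (a : ℕ) + 1 = (b : ℕ) → a ∈ A) :
    ∑ i ∈ A, (i : ℕ) = ∑ j ∈ Finset.range A.card, j := by
  have hm := mem_iff_lt_card_of_initial hP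
  refine Finset.sum_bij (fun a _ => (a : ℕ)) ?_ ?_ ?_ ?_
  · intro a haA; exact Finset.mem_range.2 ((hm a).1 haA)
  · intro a _ b _ h; exact Fin.ext h
  · intro j hj
    have hj' := Finset.mem_range.1 hj
    have hle := card_le_of_fin A
    exact ⟨⟨j, by omega⟩, (hm _).2 (by simpa), rfl⟩
  · intro a _; rfl

end Initial

theorem sign_blockPerm {n : ℕ} (A : Finset (Fin n)) :
    Equiv.Perm.sign (blockPerm A) =
      (-1 : ℤˣ) ^ (∑ i ∈ A, (i : ℕ) + ∑ j ∈ Finset.range A.card, j) := by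
  generalize hs : ∑ i ∈ A, (i : ℕ) = s
  induction s using Nat.strong_induction_on generalizing A with
  | _ s ih =>
  by_cases hP : ∀ b ∈ A, ∀ a : Fin n, (a : ℕ) + 1 = (b : ℕ) → a ∈ A
  · rw [blockPerm_initial hP, map_one, ← hs, sum_initial hP, ← two_mul, pow_mul]
    simp
  · push_neg at hP
    obtain ⟨b, hb, a, hab, ha⟩ := hP
    set A' := insert a (A.erase b) with hA'
    have hcard : A'.card = A.card := card_insert_erase A a b hab ha hb
    have hsum : ∑ i ∈ A', (i : ℕ) + 1 = ∑ i ∈ A, (i : ℕ) := by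
      have h1 : ∑ i ∈ A', (i : ℕ) = (a : ℕ) + ∑ i ∈ A.erase b, (i : ℕ) := by
        rw [hA', Finset.sum_insert (by simp [ha])]
      have h2 : ∑ i ∈ A.erase b, (i : ℕ) + (b : ℕ) = ∑ i ∈ A, (i : ℕ) :=
        Finset.sum_erase_add A _ hb
      omega
    have hswap : blockPerm A' = Equiv.swap a b * blockPerm A :=
      blockPerm_insert_erase A a b hab ha hb
    have hne : a ≠ b := fun h => by omega
    have hsign : Equiv.Perm.sign (blockPerm A') = -Equiv.Perm.sign (blockPerm A) := by
      rw [hswap, map_mul, Equiv.Perm.sign_swap hne]; exact neg_one_mul _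
    have hs' : ∑ i ∈ A', (i : ℕ) = s - 1 := by omega
    have hlt : s - 1 < s := by
      have : 1 ≤ s := by omega
      omega
    have := ih (s - 1) hlt A' hs'
    rw [hsign, hcard] at this
    have hsA : Equiv.Perm.sign (blockPerm A)
        = -(-1 : ℤˣ) ^ (s - 1 + ∑ j ∈ Finset.range A.card, j) := by
      rw [← this, neg_neg]
    rw [hsA]
    have hs1 : 1 ≤ s := by
      have hb' : (b : ℕ) ≤ ∑ i ∈ A, (i : ℕ) :=
        Finset.single_le_sum (f := fun i : Fin n => (i : ℕ)) (fun _ _ => Nat.zero_le _) hb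
      omega
    have he : s + ∑ j ∈ Finset.range A.card, j
        = (s - 1 + ∑ j ∈ Finset.range A.card, j) + 1 := by omega
    rw [he, pow_succ, mul_neg_one]

section PermOn
variable {n : ℕ}

noncomputable def permOn (σ : Equiv.Perm (Fin n)) (A B : Finset (Fin n))
    (hB : B.card = A.card) (h : ∀ x ∈ A, σ x ∈ B) : Equiv.Perm (Fin A.card) :=
  Equiv.ofBijective
    (fun i => (B.orderIsoOfFin hB).symm
      ⟨σ (A.orderEmbOfFin rfl i), h _ (A.orderEmbOfFin_mem rfl i)⟩)
    (by
      refine (Finite.injective_iff_bijective).1 ?_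
      intro i j hij
      have := (B.orderIsoOfFin hB).symm.injective hij
      have h2 : σ (A.orderEmbOfFin rfl i) = σ (A.orderEmbOfFin rfl j) :=
        congrArg Subtype.val this
      exact (A.orderEmbOfFin rfl).injective (σ.injective h2))

theorem permOn_spec (σ : Equiv.Perm (Fin n)) (A B : Finset (Fin n))
    (hB : B.card = A.card) (h : ∀ x ∈ A, σ x ∈ B) (i : Fin A.card) :
    B.orderEmbOfFin hB (permOn σ A B hB h i) = σ (A.orderEmbOfFin rfl i) := by
  have : B.orderEmbOfFin hB (permOn σ A B hB h i)
      = ↑(B.orderIsoOfFin hB (permOn σ A B hB h i)) :=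
    (Finset.coe_orderIsoOfFin_apply B hB _).symm
  rw [this]
  show ((B.orderIsoOfFin hB) ((B.orderIsoOfFin hB).symm _) : Fin n) = _
  rw [OrderIso.apply_symm_apply]

end PermOn

section Eval
variable {n k : ℕ} (hk : k ≤ n)

theorem sumEquiv_apply_lt (i : Fin n) (h : (i : ℕ) < k) :
    sumEquiv n k hk i = .inl ⟨(i : ℕ), h⟩ := by simp [_root_.sumEquiv, h]

theorem sumEquiv_apply_ge (i : Fin n) (h : ¬ (i : ℕ) < k) :
    sumEquiv n k hk i = .inr ⟨(i : ℕ) - k, by omega⟩ := by simp [_root_.sumEquiv, h]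

theorem sumEquiv_symm_inl (j : Fin k) :
    (sumEquiv n k hk).symm (.inl j) = ⟨(j : ℕ), by omega⟩ := rfl

theorem sumEquiv_symm_inr (j : Fin (n - k)) :
    (sumEquiv n k hk).symm (.inr j) = ⟨k + (j : ℕ), by omega⟩ := rfl

end Eval

set_option maxHeartbeats 1000000 in
theorem key_sign {n : ℕ} (σ : Equiv.Perm (Fin n)) (A B : Finset (Fin n))
    (hB : B.card = A.card) (hmem : ∀ x ∈ A, σ x ∈ B)
    (hBc : Bᶜ.card = Aᶜ.card) (hmemc : ∀ x ∈ Aᶜ, σ x ∈ Bᶜ) :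
    Equiv.Perm.sign (permOn σ A B hB hmem) * Equiv.Perm.sign (permOn σ Aᶜ Bᶜ hBc hmemc)
      = Equiv.Perm.sign σ * Equiv.Perm.sign (blockPerm A) * Equiv.Perm.sign (blockPerm B) := by
  set τ1 := permOn σ A B hB hmem with hτ1
  set τ2 := permOn σ Aᶜ Bᶜ hBc hmemc with hτ2
  have hle := card_le_of_fin A
  set E : Fin n ≃ (Fin A.card ⊕ Fin Aᶜ.card) :=
    (sumEquiv n A.card hle).trans
      (Equiv.sumCongr (Equiv.refl _) (finCongr (card_compl_fin A).symm)) with hE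
  set ρ : Equiv.Perm (Fin n) := (E.trans ((Equiv.sumCongr τ1 τ2).trans E.symm)) with hρdef
  have hsignρ : Equiv.Perm.sign ρ = Equiv.Perm.sign τ1 * Equiv.Perm.sign τ2 := by
    have : ρ = (E.symm).permCongr (Equiv.sumCongr τ1 τ2) := Equiv.ext fun i => rfl
    rw [this, Equiv.Perm.sign_permCongr, Equiv.Perm.sign_sumCongr]
  have hcomp : σ * blockPerm A = blockPerm B * ρ := by
    refine Equiv.ext fun i => ?_
    show σ (blockPerm A i) = blockPerm B (ρ i)
    by_cases hv : (i : ℕ) < A.card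
    · have hρi : ρ i = ⟨(τ1 ⟨(i : ℕ), hv⟩ : ℕ), by
          have := (τ1 ⟨(i : ℕ), hv⟩).is_lt; omega⟩ := by
        show E.symm ((Equiv.sumCongr τ1 τ2) (E i)) = _
        rw [hE]
        simp only [Equiv.trans_apply, sumEquiv_apply_lt hle i hv, Equiv.sumCongr_apply,
          Sum.map_inl, Equiv.refl_apply, Equiv.symm_trans_apply, Equiv.sumCongr_symm,
          Equiv.refl_symm]
        exact sumEquiv_symm_inl hle _
      rw [hρi, blockPerm_apply_lt A i hv,
        blockPerm_apply_lt B _ (by simp only [Fin.val_mk]; rw [hB]; exact (τ1 _).is_lt),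
        ← permOn_spec σ A B hB hmem ⟨(i : ℕ), hv⟩]
      exact Finset.orderEmbOfFin_eq_orderEmbOfFin_iff.2 rfl
    · have hltc : (i : ℕ) - A.card < Aᶜ.card := by rw [card_compl_fin]; omega
      have hρi : ρ i = ⟨A.card + (τ2 ⟨(i : ℕ) - A.card, hltc⟩ : ℕ), by
          have h4 := (τ2 ⟨(i : ℕ) - A.card, hltc⟩).is_lt
          have h5 := card_compl_fin A; omega⟩ := by
        show E.symm ((Equiv.sumCongr τ1 τ2) (E i)) = _
        rw [hE]
        simp only [Equiv.trans_apply, sumEquiv_apply_ge hle i hv, Equiv.sumCongr_apply,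
          Sum.map_inr, Equiv.symm_trans_apply, Equiv.sumCongr_symm, Equiv.refl_symm]
        rw [sumEquiv_symm_inr hle]
        rfl
      have hge2 : ¬ (A.card + (τ2 ⟨(i : ℕ) - A.card, hltc⟩ : ℕ)) < B.card := by
        rw [hB]; omega
      rw [hρi, blockPerm_apply_ge A i hv]
      rw [show blockPerm B ⟨A.card + (τ2 ⟨(i : ℕ) - A.card, hltc⟩ : ℕ), _⟩
          = Bᶜ.orderEmbOfFin (card_compl_fin B)
            ⟨A.card + (τ2 ⟨(i : ℕ) - A.card, hltc⟩ : ℕ) - B.card, by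
              have h4 := (τ2 ⟨(i : ℕ) - A.card, hltc⟩).is_lt
              have h5 := card_compl_fin A; omega⟩ from
        blockPerm_apply_ge B _ hge2]
      have hAc : Aᶜ.orderEmbOfFin (card_compl_fin A) ⟨(i : ℕ) - A.card, by omega⟩
          = Aᶜ.orderEmbOfFin rfl ⟨(i : ℕ) - A.card, hltc⟩ :=
        Finset.orderEmbOfFin_eq_orderEmbOfFin_iff.2 rfl
      rw [hAc, ← permOn_spec σ Aᶜ Bᶜ hBc hmemc ⟨(i : ℕ) - A.card, hltc⟩]
      exact Finset.orderEmbOfFin_eq_orderEmbOfFin_iff.2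
        (show ((τ2 ⟨(i : ℕ) - A.card, hltc⟩ : Fin Aᶜ.card) : ℕ)
            = A.card + ((τ2 ⟨(i : ℕ) - A.card, hltc⟩ : Fin Aᶜ.card) : ℕ) - B.card from by omega)
  have h1 : Equiv.Perm.sign σ * Equiv.Perm.sign (blockPerm A)
      = Equiv.Perm.sign (blockPerm B) * Equiv.Perm.sign ρ := by
    rw [← map_mul, ← map_mul, hcomp]
  rw [hsignρ] at h1
  have hsq : Equiv.Perm.sign (blockPerm B) * Equiv.Perm.sign (blockPerm B) = 1 :=
    Int.units_mul_self _
  have h2 : Equiv.Perm.sign τ1 * Equiv.Perm.sign τ2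
      = Equiv.Perm.sign (blockPerm B) * (Equiv.Perm.sign σ * Equiv.Perm.sign (blockPerm A)) := by
    rw [h1, ← mul_assoc, hsq, one_mul]
  rw [h2, mul_comm]

theorem minorM_perm {n : ℕ} {R : Type*} [CommRing R] (σ : Equiv.Perm (Fin n))
    (X : Matrix (Fin n) (Fin n) R) (hX : ∀ i j, X i j = if σ i = j then 1 else 0)
    (A B : Finset (Fin n)) (hB : B.card = A.card) (hmem : ∀ x ∈ A, σ x ∈ B) :
    minorM X A B = ((Equiv.Perm.sign (permOn σ A B hB hmem) : ℤ) : R) := by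
  rw [minorM, dif_pos hB.symm]
  have hM : (Matrix.of fun i j : Fin A.card =>
      X (A.orderEmbOfFin rfl i) (B.orderEmbOfFin hB.symm.symm j))
      = (permOn σ A B hB hmem).permMatrix R := by
    ext i j
    rw [Matrix.of_apply, hX]
    have hspec := permOn_spec σ A B hB hmem i
    have hcond : (σ (A.orderEmbOfFin rfl i) = B.orderEmbOfFin hB.symm.symm j)
        ↔ (permOn σ A B hB hmem i = j) := by
      rw [← hspec]
      constructor
      · intro h; exact (B.orderEmbOfFin hB).injective (h.trans
          (Finset.orderEmbOfFin_eq_orderEmbOfFin_iff.2 rfl).symm)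
      · intro h; rw [h]
    rw [Equiv.Perm.permMatrix, PEquiv.toMatrix_apply, Equiv.toPEquiv_apply]
    by_cases h : permOn σ A B hB hmem i = j
    · rw [if_pos (hcond.2 h)]; simp [h]
    · rw [if_neg (fun hc => h (hcond.1 hc))]
      simp only [Option.mem_def, Option.some.injEq]
      rw [if_neg (fun hc => h hc)]
  rw [hM, Matrix.det_permutation]

theorem minorM_zero {n : ℕ} {R : Type*} [CommRing R] (σ : Equiv.Perm (Fin n))
    (X : Matrix (Fin n) (Fin n) R) (hX : ∀ i j, X i j = if σ i = j then 1 else 0)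
    (A B : Finset (Fin n)) (h : A.card = B.card) (a : Fin n) (haA : a ∈ A)
    (hbB : σ a ∉ B) : minorM X A B = 0 := by
  rw [minorM, dif_pos h]
  obtain ⟨i, hi⟩ : ∃ i, A.orderEmbOfFin rfl i = a := by
    have : a ∈ Set.range (A.orderEmbOfFin rfl) := by
      rw [Finset.range_orderEmbOfFin]; exact haA
    exact this
  refine Matrix.det_eq_zero_of_row_eq_zero i fun j => ?_
  rw [Matrix.of_apply, hi, hX]
  rw [if_neg (fun hc => hbB (by rw [hc]; exact B.orderEmbOfFin_mem h.symm j))]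


theorem statement2 {n : ℕ} {R : Type*} [CommRing R] (σ : Equiv.Perm (Fin n))
    (X : Matrix (Fin n) (Fin n) R)
    (hX : ∀ i j, X i j = if σ i = j then 1 else 0)
    (A B : Finset (Fin n)) :
    lap X A B = if A.image σ = B then ((Equiv.Perm.sign σ : ℤ) : R) else 0 := by
  by_cases himg : A.image σ = B
  · rw [if_pos himg]
    have hB : B.card = A.card := by
      rw [← himg, Finset.card_image_of_injective _ σ.injective]
    have hmem : ∀ x ∈ A, σ x ∈ B := fun x hx => himg ▸ Finset.mem_image_of_mem σ hx
    have himgc : Aᶜ.image σ = Bᶜ := by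
      ext x
      rw [Finset.mem_compl, ← himg]
      simp only [Finset.mem_image, Finset.mem_compl]
      constructor
      · rintro ⟨y, hy, rfl⟩ ⟨z, hz, hzy⟩
        exact hy (by rw [← σ.injective hzy]; exact hz)
      · intro hx
        exact ⟨σ.symm x, fun hc => hx ⟨σ.symm x, hc, σ.apply_symm_apply x⟩,
          σ.apply_symm_apply x⟩
    have hBc : Bᶜ.card = Aᶜ.card := by
      rw [← himgc, Finset.card_image_of_injective _ σ.injective]
    have hmemc : ∀ x ∈ Aᶜ, σ x ∈ Bᶜ := fun x hx => himgc ▸ Finset.mem_image_of_mem σ hx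
    rw [lap, minorM_perm σ X hX A B hB hmem, minorM_perm σ X hX Aᶜ Bᶜ hBc hmemc]
    have hkey := key_sign σ A B hB hmem hBc hmemc
    rw [sign_blockPerm A, sign_blockPerm B, hB] at hkey
    set SA := ∑ i ∈ A, (i : ℕ) with hSA
    set SB := ∑ i ∈ B, (i : ℕ) with hSB
    set T := ∑ j ∈ Finset.range A.card, j with hT
    have h2 : Equiv.Perm.sign (permOn σ A B hB hmem)
        * Equiv.Perm.sign (permOn σ Aᶜ Bᶜ hBc hmemc)
        = Equiv.Perm.sign σ * (-1 : ℤˣ) ^ (SA + SB) := by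
      rw [hkey, mul_assoc, ← pow_add]
      congr 1
      have he : SA + T + (SB + T) = (SA + SB) + 2 * T := by omega
      rw [he, pow_add, pow_mul, Int.units_sq, one_pow, mul_one]
    have hprod : ((Equiv.Perm.sign (permOn σ A B hB hmem) : ℤ) : R)
        * ((Equiv.Perm.sign (permOn σ Aᶜ Bᶜ hBc hmemc) : ℤ) : R)
        = ((Equiv.Perm.sign σ : ℤ) : R) * (-1 : R) ^ (SA + SB) := by
      have := congrArg (fun u : ℤˣ => ((u : ℤ) : R)) h2
      simpa [Units.val_mul, Int.cast_mul] using this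
    rw [hprod]
    have hEA : ∑ i ∈ A, ((i : ℕ) + 1) = SA + A.card := by
      rw [Finset.sum_add_distrib, Finset.sum_const, smul_eq_mul, mul_one]
    have hEB : ∑ j ∈ B, ((j : ℕ) + 1) = SB + B.card := by
      rw [Finset.sum_add_distrib, Finset.sum_const, smul_eq_mul, mul_one]
    rw [hEA, hEB]
    have he2 : SA + A.card + (SB + B.card) = (SA + SB) + 2 * A.card := by omega
    rw [he2, pow_add, pow_mul, neg_one_sq, one_pow, mul_one]
    have hsq : ((-1 : R) ^ (SA + SB)) * ((-1 : R) ^ (SA + SB)) = 1 := by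
      rw [← pow_add, ← two_mul, pow_mul, neg_one_sq, one_pow]
    rw [mul_comm ((Equiv.Perm.sign σ : ℤ) : R) ((-1 : R) ^ (SA + SB)), ← mul_assoc, hsq, one_mul]
  · rw [if_neg himg, lap]
    by_cases hcard : A.card = B.card
    · have himage_card : (A.image σ).card = A.card := Finset.card_image_of_injective _ σ.injective
      have hnotsub : ¬ A.image σ ⊆ B := fun hsub =>
        himg (Finset.eq_of_subset_of_card_le hsub (by omega))
      obtain ⟨x, hx, hxB⟩ := Finset.not_subset.1 hnotsub
      obtain ⟨a, haA, rfl⟩ := Finset.mem_image.1 hx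
      rw [minorM_zero σ X hX A B hcard a haA hxB, zero_mul, mul_zero]
    · rw [minorM, dif_neg hcard, zero_mul, mul_zero]
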